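/- Let Γ₀ be a maximally Log-consistent set, M^c the canonical model for Γ₀, Δ ∈ [Γ₀]_⊞, and φ ∈ L_CPL. Then I φ̄ ∈ Δ if and only if Var(φ) ⊆ f^c(Δ), where f^c(Δ) = {p ∈ Prop : I p̄ ∈ Δ}. -/

import Mathlib

/-- Formulas of classical propositional logic `L_CPL` over a countable set
of atomic propositions (represented by natural numbers). -/
inductive CPL : Type
  | top : CPL
  | atom : ℕ → CPL
  | neg : CPL → CPL
  | or : CPL → CPL → CPL
  | and : CPL → CPL → CPL
  deriving DecidableEq
/-- `Var(φ)`: the (finite) set of atomic propositions occurring in `φ`. -/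
def CPL.var : CPL → Finset ℕ
  | .top => ∅
  | .atom p => {p}
  | .neg φ => φ.var
  | .or φ ψ => φ.var ∪ ψ.var
  | .and φ ψ => φ.var ∪ ψ.var

/-- `p̄ := p ∨ ¬p`. -/
def pbar (p : ℕ) : CPL := .or (.atom p) (.neg (.atom p))

/-- Conjunction of a list of `L_CPL` formulas (empty conjunction is `⊤`). -/
def conjList : List CPL → CPL
  | [] => .top
  | [α] => α
  | α :: β :: rest => .and α (conjList (β :: rest))

/-- `φ̄ := ⋀_{p ∈ Var(φ)} (p ∨ ¬p)`, with the conjuncts taken in the fixed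
(increasing) enumeration order of the atomic propositions. -/
def CPL.bar (φ : CPL) : CPL := conjList ((φ.var.sort (· ≤ ·)).map pbar)
/-- Formulas of the language `L_Int`, extending `L_CPL` (embedded via `of`) by
negation, disjunction, conjunction, the global modality `⊞` (`box`) and the
intention modality `I` (`int`), which applies only to `L_CPL` formulas. -/
inductive Form : Type
  | of : CPL → Form
  | neg : Form → Form
  | or : Form → Form → Form
  | and : Form → Form → Form
  | box : Form → Form
  | int : CPL → Form
  deriving DecidableEq
/-- Material implication in `L_Int`: `φ → ψ := ¬φ ∨ ψ`. -/
def Form.imp (φ ψ : Form) : Form := .or (.neg φ) ψ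

/-- Material biconditional in `L_Int`: `φ ↔ ψ := (φ → ψ) ∧ (ψ → φ)`. -/
def Form.iff (φ ψ : Form) : Form := .and (φ.imp ψ) (ψ.imp φ)

/-- `⊥ := ¬⊤`. -/
def Form.bot : Form := .neg (.of .top)

/-- Boolean evaluation of `L_CPL` formulas under a valuation of the atoms. -/
def CPL.eval (v : ℕ → Bool) : CPL → Bool
  | .top => true
  | .atom p => v p
  | .neg φ => !φ.eval v
  | .or φ ψ => φ.eval v || ψ.eval v
  | .and φ ψ => φ.eval v && ψ.eval v

/-- Boolean evaluation of `L_Int` formulas, treating `⊞`- and `I`-formulas as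
atoms (evaluated by `u`). -/
def Form.eval (v : ℕ → Bool) (u : Form → Bool) : Form → Bool
  | .of α => α.eval v
  | .neg φ => !φ.eval v u
  | .or φ ψ => φ.eval v u || ψ.eval v u
  | .and φ ψ => φ.eval v u && ψ.eval v u
  | .box φ => u (.box φ)
  | .int α => u (.int α)

/-- Classical propositional tautologies of `L_Int` (with modal formulas
treated as atoms). -/
def Taut (φ : Form) : Prop := ∀ v u, φ.eval v u = true

/-- Derivability in the proof system `Log`: classical tautologies and Modus
Ponens; `S5` axioms and necessitation for `⊞`; and the intention axioms
Ax1: `I⊤`; Ax2: `Iφ → Iφ̄`; Ax3: `Iφ → ¬I¬φ`; Ax4: `(Iφ ∧ Iψ) ↔ I(φ ∧ ψ)`;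
Ax5: `⊞(ψ → φ) → ((Iψ ∧ Iφ̄) → Iφ)`. -/
inductive Deriv : Set Form → Form → Prop
  | prem {Γ : Set Form} {φ : Form} : φ ∈ Γ → Deriv Γ φ
  | taut {Γ : Set Form} {φ : Form} : Taut φ → Deriv Γ φ
  | mp {Γ : Set Form} {φ ψ : Form} :
      Deriv Γ (φ.imp ψ) → Deriv Γ φ → Deriv Γ ψ
  | boxK {Γ : Set Form} (φ ψ : Form) :
      Deriv Γ ((Form.box (φ.imp ψ)).imp ((Form.box φ).imp (Form.box ψ)))
  | boxT {Γ : Set Form} (φ : Form) : Deriv Γ ((Form.box φ).imp φ)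
  | box5 {Γ : Set Form} (φ : Form) :
      Deriv Γ ((Form.neg (Form.box φ)).imp (Form.box (Form.neg (Form.box φ))))
  | nec {Γ : Set Form} {φ : Form} : Deriv ∅ φ → Deriv Γ (Form.box φ)
  | ax1 {Γ : Set Form} : Deriv Γ (Form.int .top)
  | ax2 {Γ : Set Form} (α : CPL) :
      Deriv Γ ((Form.int α).imp (Form.int α.bar))
  | ax3 {Γ : Set Form} (α : CPL) :
      Deriv Γ ((Form.int α).imp (Form.neg (Form.int (CPL.neg α))))
  | ax4 {Γ : Set Form} (α β : CPL) :
      Deriv Γ ((Form.and (.int α) (.int β)).iff (Form.int (.and α β)))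
  | ax5 {Γ : Set Form} (α β : CPL) :
      Deriv Γ ((Form.box ((Form.of β).imp (Form.of α))).imp
        ((Form.and (.int β) (.int α.bar)).imp (Form.int α)))

/-- A set of formulas is `Log`-consistent if `⊥` is not derivable from it. -/
def LogConsistent (Γ : Set Form) : Prop := ¬ Deriv Γ Form.bot

/-- A maximally `Log`-consistent set: consistent with no proper consistent
extension. -/
def MCS (Γ : Set Form) : Prop :=
  LogConsistent Γ ∧ ∀ Δ, LogConsistent Δ → Γ ⊆ Δ → Δ = Γ
/-- `Γ[⊞] = {φ : ⊞φ ∈ Γ}`. -/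
def boxSet (Γ : Set Form) : Set Form := {φ | Form.box φ ∈ Γ}

/-- `Γ[I] = {φ ∈ L_Int : Iψ ∧ ⊞(ψ → φ) ∈ Γ for some ψ ∈ L_CPL}`. -/
def intSet (Γ : Set Form) : Set Form :=
  {φ | ∃ ψ : CPL, Form.and (Form.int ψ) (Form.box ((Form.of ψ).imp φ)) ∈ Γ}
/-- `[Γ₀]_⊞`: the `∼⊞`-equivalence class of `Γ₀`, i.e. the maximally
`Log`-consistent sets `Δ` with `Γ₀[⊞] ⊆ Δ`. -/
def canonDomain (Γ₀ : Set Form) : Set (Set Form) :=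
  {Δ | MCS Δ ∧ boxSet Γ₀ ⊆ Δ}

/-- `f^c(Δ) = {p ∈ Prop : Ip̄ ∈ Δ}`. -/
def fC (Δ : Set Form) : Set ℕ := {p | Form.int (pbar p) ∈ Δ}

lemma deriv_cut {Γ : Set Form} {φ ψ : Form} (h1 : Deriv Γ φ)
    (h2 : Deriv (insert φ Γ) ψ) : Deriv Γ ψ := by
  generalize hs : insert φ Γ = S at h2
  induction h2 with
  | prem h =>
      subst hs
      rcases h with h | h
      · rw [h]; exact h1
      · exact Deriv.prem h
  | taut h => exact Deriv.taut h
  | mp _ _ ih1 ih2 => exact Deriv.mp (ih1 hs) (ih2 hs)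
  | boxK α β => exact Deriv.boxK α β
  | boxT α => exact Deriv.boxT α
  | box5 α => exact Deriv.box5 α
  | nec h => exact Deriv.nec h
  | ax1 => exact Deriv.ax1
  | ax2 α => exact Deriv.ax2 α
  | ax3 α => exact Deriv.ax3 α
  | ax4 α β => exact Deriv.ax4 α β
  | ax5 α β => exact Deriv.ax5 α β

lemma mcs_mem {Γ : Set Form} (hΓ : MCS Γ) {φ : Form} (h : Deriv Γ φ) :
    φ ∈ Γ := by
  have hcons : LogConsistent (insert φ Γ) := fun hbot => hΓ.1 (deriv_cut h hbot)
  have := hΓ.2 (insert φ Γ) hcons (Set.subset_insert _ _)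
  rw [← this]; exact Set.mem_insert _ _

lemma mcs_mp {Γ : Set Form} (hΓ : MCS Γ) {φ ψ : Form}
    (h : Deriv Γ (φ.imp ψ)) (hφ : φ ∈ Γ) : ψ ∈ Γ :=
  mcs_mem hΓ (Deriv.mp h (Deriv.prem hφ))

lemma taut_and_left (φ ψ : Form) : Taut ((Form.and φ ψ).imp φ) := by
  intro v u
  cases h1 : Form.eval v u φ <;> cases h2 : Form.eval v u ψ <;>
    simp [Form.imp, Form.eval, h1, h2]

lemma taut_and_right (φ ψ : Form) : Taut ((Form.and φ ψ).imp ψ) := by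
  intro v u
  cases h1 : Form.eval v u φ <;> cases h2 : Form.eval v u ψ <;>
    simp [Form.imp, Form.eval, h1, h2]

lemma taut_and_intro (φ ψ : Form) : Taut (φ.imp (ψ.imp (Form.and φ ψ))) := by
  intro v u
  cases h1 : Form.eval v u φ <;> cases h2 : Form.eval v u ψ <;>
    simp [Form.imp, Form.eval, h1, h2]

lemma int_and_mem_left {Γ : Set Form} (hΓ : MCS Γ) {α β : CPL}
    (h : Form.int (CPL.and α β) ∈ Γ) : Form.int α ∈ Γ := by
  have h1 : Deriv Γ ((Form.int (CPL.and α β)).imp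
      (Form.and (Form.int α) (Form.int β))) :=
    Deriv.mp (Deriv.taut (taut_and_right _ _)) (Deriv.ax4 α β)
  have h2 : Form.and (Form.int α) (Form.int β) ∈ Γ := mcs_mp hΓ h1 h
  exact mcs_mp hΓ (Deriv.taut (taut_and_left _ _)) h2

lemma int_and_mem_right {Γ : Set Form} (hΓ : MCS Γ) {α β : CPL}
    (h : Form.int (CPL.and α β) ∈ Γ) : Form.int β ∈ Γ := by
  have h1 : Deriv Γ ((Form.int (CPL.and α β)).imp
      (Form.and (Form.int α) (Form.int β))) :=
    Deriv.mp (Deriv.taut (taut_and_right _ _)) (Deriv.ax4 α β)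
  have h2 : Form.and (Form.int α) (Form.int β) ∈ Γ := mcs_mp hΓ h1 h
  exact mcs_mp hΓ (Deriv.taut (taut_and_right _ _)) h2

lemma int_and_mem_intro {Γ : Set Form} (hΓ : MCS Γ) {α β : CPL}
    (ha : Form.int α ∈ Γ) (hb : Form.int β ∈ Γ) :
    Form.int (CPL.and α β) ∈ Γ := by
  have h2 : Form.and (Form.int α) (Form.int β) ∈ Γ :=
    mcs_mem hΓ (Deriv.mp (Deriv.mp (Deriv.taut (taut_and_intro _ _))
      (Deriv.prem ha)) (Deriv.prem hb))
  exact mcs_mp hΓ (Deriv.mp (Deriv.taut (taut_and_left _ _)) (Deriv.ax4 α β)) h2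

lemma int_conj_iff {Δ : Set Form} (hΔ : MCS Δ) (l : List ℕ) :
    Form.int (conjList (l.map pbar)) ∈ Δ ↔ ∀ p ∈ l, Form.int (pbar p) ∈ Δ := by
  induction l with
  | nil =>
      simp only [List.map_nil, conjList, List.not_mem_nil, false_implies,
        implies_true, iff_true]
      exact mcs_mem hΔ Deriv.ax1
  | cons p l ih =>
      cases l with
      | nil => simp [conjList]
      | cons q m =>
          have hconj : conjList ((p :: q :: m).map pbar) =
              CPL.and (pbar p) (conjList ((q :: m).map pbar)) := rfl
          rw [hconj]
          constructor
          · intro h r hr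
            rcases List.mem_cons.mp hr with hr | hr
            · subst hr; exact int_and_mem_left hΔ h
            · exact ih.mp (int_and_mem_right hΔ h) r hr
          · intro h
            exact int_and_mem_intro hΔ (h p List.mem_cons_self)
              (ih.mpr fun r hr => h r (List.mem_cons_of_mem _ hr))

/-- Let `Γ₀` be maximally `Log`-consistent, `Δ ∈ [Γ₀]_⊞` and
`φ ∈ L_CPL`. Then `Iφ̄ ∈ Δ` iff `Var(φ) ⊆ f^c(Δ)`. -/
theorem int_bar_iff_var_subset_fC (Γ₀ Δ : Set Form) (hΓ₀ : MCS Γ₀)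
    (hΔ : Δ ∈ canonDomain Γ₀) (φ : CPL) :
    Form.int φ.bar ∈ Δ ↔ ∀ p ∈ φ.var, p ∈ fC Δ := by
  have hmcs : MCS Δ := hΔ.1
  rw [CPL.bar, int_conj_iff hmcs]
  constructor
  · intro h p hp
    exact h p ((Finset.mem_sort _).mpr hp)
  · intro h p hp
    exact h p ((Finset.mem_sort _).mp hp)
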